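/- Let ψ be a holomorphic function on a neighborhood U of 1 ∈ ℂ that is real-valued on U ∩ ℝ and satisfies ψ(z) = z + O(|z−1|³). Then there exist r₀ ∈ (0,1) and M > 0 such that for all r ∈ (r₀, 1): ψ'(r)/(1 − ψ(r)²) = (1/(1 − r²))·(1 + E(r)) with |E(r)| ≤ M·(1 − r)². -/

import Mathlib

open Set Metric Complex Filter

noncomputable section

/-- The Kobayashi metric of a domain `Ω` at the point `q` in the direction `ξ`. -/
def kobMetric {E : Type*} [NormedAddCommGroup E] [NormedSpace ℂ E]
    (Ω : Set E) (q ξ : E) : ℝ :=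
  sInf {lam : ℝ | 0 < lam ∧ ∃ f : ℂ → E, DifferentiableOn ℂ f (ball (0:ℂ) 1) ∧
    MapsTo f (ball (0:ℂ) 1) Ω ∧ f 0 = q ∧ lam • deriv f 0 = ξ}

/-- The Carathéodory metric of a domain `Ω` at the point `q` in the direction `ξ`. -/
def carMetric {E : Type*} [NormedAddCommGroup E] [NormedSpace ℂ E]
    (Ω : Set E) (q ξ : E) : ℝ :=
  sSup {r : ℝ | ∃ f : E → ℂ, DifferentiableOn ℂ f Ω ∧ MapsTo f Ω (ball (0:ℂ) 1) ∧
    f q = 0 ∧ r = ‖fderiv ℂ f q ξ‖}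

/-- The real Hessian quadratic form of `φ` at `p` in the direction `v`. -/
def realHessian {E : Type*} [NormedAddCommGroup E] [NormedSpace ℝ E]
    (φ : E → ℝ) (p v : E) : ℝ :=
  iteratedFDeriv ℝ 2 φ p ![v, v]

/-- The Levi form of `φ` at `p` in direction `w`, expressed via the real Hessian:
`Σ ∂²φ/∂z_i∂z̄_j w_i w̄_j = (H(w) + H(i·w))/4`. -/
def leviForm {E : Type*} [NormedAddCommGroup E] [NormedSpace ℂ E]
    (φ : E → ℝ) (p w : E) : ℝ :=
  (realHessian φ p w + realHessian φ p (Complex.I • w)) / 4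

/-- An open set `U ⊆ ℂⁿ` is holomorphically convex if for every compact `L ⊆ U`
its holomorphically convex hull in `U` is compact. -/
def IsHolConvex {n : ℕ} (U : Set (EuclideanSpace ℂ (Fin n))) : Prop :=
  ∀ L : Set (EuclideanSpace ℂ (Fin n)), L ⊆ U → IsCompact L →
    IsCompact {z ∈ U | ∀ f : EuclideanSpace ℂ (Fin n) → ℂ,
      DifferentiableOn ℂ f U → ‖f z‖ ≤ sSup ((fun w => ‖f w‖) '' L)}

/-- A compact set `X ⊆ ℂⁿ` is a Stein compact if every open set containing `X`
contains a holomorphically convex open neighbourhood of `X`. -/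
def IsSteinCompact {n : ℕ} (X : Set (EuclideanSpace ℂ (Fin n))) : Prop :=
  IsCompact X ∧ ∀ V : Set (EuclideanSpace ℂ (Fin n)), IsOpen V → X ⊆ V →
    ∃ U : Set (EuclideanSpace ℂ (Fin n)), IsOpen U ∧ X ⊆ U ∧ U ⊆ V ∧ IsHolConvex U

/-- `p` is a strictly pseudoconvex boundary point of `Ω` of class `C⁴`, witnessed by the
defining function `φ` on the neighbourhood `U` of `p`: the Levi form of `φ` at `p` is
positive on the nonzero complex tangent vectors (those `w` with `dφ_p(w) = dφ_p(i·w) = 0`,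
i.e. `Σ_j ∂φ/∂z_j(p) w_j = 0`). -/
def IsSPCBdryPtC4 {n : ℕ} (Ω : Set (EuclideanSpace ℂ (Fin n)))
    (p : EuclideanSpace ℂ (Fin n)) (U : Set (EuclideanSpace ℂ (Fin n)))
    (φ : EuclideanSpace ℂ (Fin n) → ℝ) : Prop :=
  IsOpen U ∧ p ∈ U ∧ ContDiffOn ℝ 4 φ U ∧
    Ω ∩ U = {z ∈ U | φ z < 0} ∧ frontier Ω ∩ U = {z ∈ U | φ z = 0} ∧
    fderiv ℝ φ p ≠ 0 ∧
    ∀ w : EuclideanSpace ℂ (Fin n), w ≠ 0 → fderiv ℝ φ p w = 0 →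
      fderiv ℝ φ p (Complex.I • w) = 0 → 0 < leviForm φ p w

/-- The pinched cone `C_{η,ν}(p)` for a domain with outward unit normal `e^{iθ}` at `p`. -/
def pinchedCone (p : ℂ) (θ η ν : ℝ) : Set ℂ :=
  {z : ℂ | |(Complex.exp (-(θ:ℂ) * Complex.I) * (z - p)).im| <
      η * ((Complex.exp (-(θ:ℂ) * Complex.I) * (z - p)).re)^2 ∧
    -ν < (Complex.exp (-(θ:ℂ) * Complex.I) * (z - p)).re ∧
    (Complex.exp (-(θ:ℂ) * Complex.I) * (z - p)).re < 0}

/-- A planar domain `D` is of class `C⁴` near `p ∈ ∂D` with curvature `κ`, where the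
outward unit normal at `p` is `e^{iθ}`: after the rigid motion `z ↦ e^{-iθ}(z - p)` there
is a `C⁴` local defining function of the form `2 Re z + κ|z|² + O(|z|³)`. -/
def IsC4CurvatureAt (D : Set ℂ) (p : ℂ) (θ κ : ℝ) : Prop :=
  ∃ U : Set ℂ, IsOpen U ∧ (0:ℂ) ∈ U ∧ ∃ φ : ℂ → ℝ, ContDiffOn ℝ 4 φ U ∧
    ((fun z => Complex.exp (-(θ:ℂ) * Complex.I) * (z - p)) '' D) ∩ U = {z ∈ U | φ z < 0} ∧
    frontier ((fun z => Complex.exp (-(θ:ℂ) * Complex.I) * (z - p)) '' D) ∩ U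
      = {z ∈ U | φ z = 0} ∧
    ∃ C > 0, ∀ z ∈ U, |φ z - 2 * z.re - κ * ‖z‖^2| ≤ C * ‖z‖^3

/-- A planar domain has `C²` smooth boundary. -/
def HasC2Boundary (D : Set ℂ) : Prop :=
  ∀ p ∈ frontier D, ∃ U : Set ℂ, IsOpen U ∧ p ∈ U ∧ ∃ φ : ℂ → ℝ, ContDiffOn ℝ 2 φ U ∧
    D ∩ U = {z ∈ U | φ z < 0} ∧ frontier D ∩ U = {z ∈ U | φ z = 0} ∧
    ∀ z ∈ U, fderiv ℝ φ z ≠ 0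

/-- A planar domain has `C⁴` smooth boundary. -/
def HasC4Boundary (D : Set ℂ) : Prop :=
  ∀ p ∈ frontier D, ∃ U : Set ℂ, IsOpen U ∧ p ∈ U ∧ ∃ φ : ℂ → ℝ, ContDiffOn ℝ 4 φ U ∧
    D ∩ U = {z ∈ U | φ z < 0} ∧ frontier D ∩ U = {z ∈ U | φ z = 0} ∧
    ∀ z ∈ U, fderiv ℝ φ z ≠ 0

/-- A planar domain has real-analytic boundary. -/
def HasAnalyticBoundary (D : Set ℂ) : Prop :=
  ∀ p ∈ frontier D, ∃ U : Set ℂ, IsOpen U ∧ p ∈ U ∧ ∃ φ : ℂ → ℝ, AnalyticOnNhd ℝ φ U ∧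
    D ∩ U = {z ∈ U | φ z < 0} ∧ frontier D ∩ U = {z ∈ U | φ z = 0} ∧
    ∀ z ∈ U, fderiv ℝ φ z ≠ 0

/-- `h` is harmonic on the planar set `D`. -/
def HarmonicOnSet (h : ℂ → ℝ) (D : Set ℂ) : Prop :=
  ContDiffOn ℝ 2 h D ∧ ∀ z ∈ D, realHessian h z 1 + realHessian h z Complex.I = 0

/-- The squeezing function of a planar domain. -/
def squeezingFn (D : Set ℂ) (z : ℂ) : ℝ :=
  sSup {r : ℝ | 0 < r ∧ ∃ f : ℂ → ℂ, DifferentiableOn ℂ f D ∧ InjOn f D ∧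
    MapsTo f D (ball (0:ℂ) 1) ∧ f z = 0 ∧ ball (0:ℂ) r ⊆ f '' D}

/-- The point `(a, v) ∈ ℂ × ℂⁿ = ℂⁿ⁺¹`. -/
def epCons {n : ℕ} (a : ℂ) (v : EuclideanSpace ℂ (Fin n)) : EuclideanSpace ℂ (Fin (n+1)) :=
  (WithLp.equiv 2 (Fin (n+1) → ℂ)).symm (Fin.cons a (WithLp.equiv 2 (Fin n → ℂ) v))

/-- The projection `z = (z₁, z') ↦ z'` from `ℂⁿ⁺¹` to `ℂⁿ`. -/
def epTail {n : ℕ} (z : EuclideanSpace ℂ (Fin (n+1))) : EuclideanSpace ℂ (Fin n) :=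
  (WithLp.equiv 2 (Fin n → ℂ)).symm (fun i => z i.succ)

end
private lemma aux_cube_bound (c t : ℝ) (hc : 0 ≤ c) (ht : 0 ≤ t) :
    c * (3*t/2)^3 ≤ 7*c*t^2 * (t/2) := by
  nlinarith [mul_nonneg hc (pow_nonneg ht 3)]

private lemma aux_pow3_le (t : ℝ) (h0 : 0 ≤ t) (h1 : t ≤ 1) : t^3 ≤ t := by
  nlinarith [mul_nonneg (mul_nonneg h0 (by linarith : (0:ℝ) ≤ 1 - t))
    (by linarith : (0:ℝ) ≤ 1 + t)]

private lemma aux_pow2_le (t : ℝ) (h0 : 0 ≤ t) (h1 : t ≤ 1) : t^2 ≤ t := by nlinarith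

private lemma aux_ct_le_one (c t : ℝ) (hc : 0 < c) (h0 : 0 ≤ t) (h : t < 1/(c+1)) :
    c*t ≤ 1 := by
  have := (lt_div_iff₀ (by positivity : (0:ℝ) < c+1)).1 h
  nlinarith

private lemma aux_3ct_le_half (c t : ℝ) (hc : 0 < c) (h0 : 0 ≤ t) (h : t < 1/(6*c+2)) :
    3*c*t ≤ 1/2 := by
  have := (lt_div_iff₀ (by positivity : (0:ℝ) < 6*c+2)).1 h
  nlinarith

private lemma aux_denom (c r : ℝ) (hc : 0 ≤ c) (hr0 : 0 ≤ r) (hr1 : r ≤ 1) :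
    c*(1-r)^3*3 ≤ 3*c*(1-r)^2*(1-r^2) := by
  nlinarith [mul_nonneg (mul_nonneg hc hr0) (pow_nonneg (by linarith : (0:ℝ) ≤ 1-r) 3)]

/-- If `ψ` is holomorphic near `1 ∈ ℂ`, real on the reals, and
`ψ(z) = z + O(|z-1|³)`, then for real `r` close to `1`,
`ψ'(r)/(1 - ψ(r)²) = (1/(1 - r²))·(1 + E(r))` with `|E(r)| ≤ M(1 - r)²`. -/
theorem riemann_map_metric_expansion (U : Set ℂ) (hU : IsOpen U) (h1 : (1:ℂ) ∈ U)
    (ψ : ℂ → ℂ) (hψ : DifferentiableOn ℂ ψ U)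
    (hreal : ∀ x : ℝ, (x:ℂ) ∈ U → (ψ x).im = 0)
    (C₀ : ℝ) (hexp : ∀ z ∈ U, ‖ψ z - z‖ ≤ C₀ * ‖z - 1‖^3) :
    ∃ r₀ : ℝ, 0 < r₀ ∧ r₀ < 1 ∧ ∃ M > (0:ℝ), ∀ r : ℝ, r₀ < r → r < 1 →
      ∃ E : ℂ, deriv ψ r / (1 - ψ r ^ 2) = (1 / (1 - (r:ℂ)^2)) * (1 + E) ∧
        ‖E‖ ≤ M * (1 - r)^2 := by
  obtain ⟨ε, hε, hball⟩ := Metric.isOpen_iff.1 hU 1 h1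
  obtain ⟨C₁, hC₁, hexp'⟩ : ∃ C : ℝ, 0 < C ∧ ∀ z ∈ U, ‖ψ z - z‖ ≤ C * ‖z - 1‖ ^ 3 := by
    refine ⟨|C₀| + 1, by positivity, fun z hz => (hexp z hz).trans ?_⟩
    have hC : C₀ ≤ |C₀| + 1 := by
      have := le_abs_self C₀; linarith
    have := pow_nonneg (norm_nonneg (z - 1)) 3
    nlinarith
  refine ⟨max (max (1/2) (1 - ε/2)) (max (1 - 1/(C₁+1)) (1 - 1/(6*C₁+2))),
    lt_of_lt_of_le (by norm_num) ((le_max_left _ _).trans (le_max_left _ _)), ?_,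
    20*C₁+1, by positivity, ?_⟩
  · apply max_lt (max_lt (by norm_num) (by linarith)) (max_lt ?_ ?_)
    · have : (0:ℝ) < 1/(C₁+1) := by positivity
      linarith
    · have : (0:ℝ) < 1/(6*C₁+2) := by positivity
      linarith
  intro r hr hr1
  have hr2 : 1/2 < r := ((le_max_left _ _).trans (le_max_left _ _)).trans_lt hr
  have hrε : 1 - r < ε/2 := by
    have := ((le_max_right _ _).trans (le_max_left _ _)).trans_lt hr; linarith
  have hrC : 1 - r < 1/(C₁+1) := by
    have := ((le_max_left _ _).trans (le_max_right _ _)).trans_lt hr; linarith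
  have hrB : 1 - r < 1/(6*C₁+2) := by
    have := ((le_max_right _ _).trans (le_max_right _ _)).trans_lt hr; linarith
  have h1r : 0 < 1 - r := by linarith
  have hrU : ∀ z : ℂ, ‖z - (r:ℂ)‖ ≤ (1-r)/2 → z ∈ U := by
    intro z hz
    apply hball
    rw [mem_ball, dist_eq_norm]
    have h1 : ‖z - 1‖ ≤ ‖z - (r:ℂ)‖ + ‖(r:ℂ) - 1‖ := by
      simpa using norm_add_le (z - r) ((r:ℂ) - 1)
    have h2 : ‖(r:ℂ) - 1‖ = 1 - r := by
      rw [show (r:ℂ) - 1 = ((r - 1 : ℝ) : ℂ) by push_cast; ring, Complex.norm_real]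
      rw [Real.norm_eq_abs, abs_of_nonpos (by linarith)]; ring
    rw [h2] at h1
    linarith
  have hρ : 0 < (1-r)/2 := by linarith
  have hgd : DifferentiableOn ℂ (fun z => ψ z - z) U := hψ.sub differentiableOn_id
  have hdc : DiffContOnCl ℂ (fun z => ψ z - z) (ball (r:ℂ) ((1-r)/2)) := by
    apply DifferentiableOn.diffContOnCl
    rw [closure_ball _ hρ.ne']
    exact hgd.mono fun z hz => hrU z (by simpa [mem_closedBall, dist_eq_norm] using hz)
  have hCb : ∀ z ∈ sphere (r:ℂ) ((1-r)/2), ‖ψ z - z‖ ≤ C₁ * (3*(1-r)/2)^3 := by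
    intro z hz
    have hzr : ‖z - (r:ℂ)‖ = (1-r)/2 := by
      simpa [mem_sphere, dist_eq_norm] using hz
    have hzU : z ∈ U := hrU z hzr.le
    have hz1 : ‖z - 1‖ ≤ 3*(1-r)/2 := by
      have h1 : ‖z - 1‖ ≤ ‖z - (r:ℂ)‖ + ‖(r:ℂ) - 1‖ := by
        simpa using norm_add_le (z - r) ((r:ℂ) - 1)
      have h2 : ‖(r:ℂ) - 1‖ = 1 - r := by
        rw [show (r:ℂ) - 1 = ((r - 1 : ℝ) : ℂ) by push_cast; ring, Complex.norm_real]
        rw [Real.norm_eq_abs, abs_of_nonpos (by linarith)]; ring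
      rw [hzr, h2] at h1; linarith
    calc ‖ψ z - z‖ ≤ C₁ * ‖z - 1‖ ^ 3 := hexp' z hzU
      _ ≤ C₁ * (3*(1-r)/2)^3 := by gcongr
  have hderivg : ‖deriv (fun z => ψ z - z) (r:ℂ)‖ ≤ 7*C₁*(1-r)^2 := by
    refine (Complex.norm_deriv_le_of_forall_mem_sphere_norm_le hρ hdc hCb).trans ?_
    rw [div_le_iff₀ hρ]
    exact aux_cube_bound C₁ (1-r) hC₁.le h1r.le
  have hrU' : (r:ℂ) ∈ U := hrU _ (by simp [hρ.le])
  have hψr : DifferentiableAt ℂ ψ (r:ℂ) := hψ.differentiableAt (hU.mem_nhds hrU')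
  obtain ⟨a, ha⟩ : ∃ a : ℂ, a = deriv (fun z => ψ z - z) (r:ℂ) := ⟨_, rfl⟩
  have hna : ‖a‖ ≤ 7*C₁*(1-r)^2 := ha ▸ hderivg
  have hax : deriv ψ (r:ℂ) = 1 + a := by
    have h5 : deriv (fun z => ψ z - z) (r:ℂ) = deriv ψ (r:ℂ) - 1 := by
      rw [deriv_fun_sub hψr differentiableAt_fun_id]
      simp
    rw [ha, h5]; ring
  have hr1c : ‖(r:ℂ) - 1‖ = 1 - r := by
    rw [show (r:ℂ) - 1 = ((r - 1 : ℝ) : ℂ) by push_cast; ring, Complex.norm_real]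
    rw [Real.norm_eq_abs, abs_of_nonpos (by linarith)]; ring
  have hδ : ‖ψ (r:ℂ) - (r:ℂ)‖ ≤ C₁ * (1-r)^3 := by
    have := hexp' (r:ℂ) hrU'
    rwa [hr1c] at this
  have hδ1 : ‖ψ (r:ℂ) - (r:ℂ)‖ ≤ 1 := by
    have hcube : (1-r)^3 ≤ (1-r) := aux_pow3_le (1-r) h1r.le (by linarith)
    have h2 : C₁ * (1-r)^3 ≤ C₁ * (1-r) := mul_le_mul_of_nonneg_left hcube hC₁.le
    have h3 : C₁ * (1-r) ≤ 1 := aux_ct_le_one C₁ (1-r) hC₁ h1r.le hrC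
    linarith
  have h1r2 : (0:ℝ) < 1 - r^2 := by
    have hp : (0:ℝ) < (1-r)*(1+r) := mul_pos h1r (by linarith)
    linarith [hp]
  have hcast : (1:ℂ) - (r:ℂ)^2 = ((1 - r^2 : ℝ) : ℂ) := by push_cast; ring
  have h1r2c : (1:ℂ) - (r:ℂ)^2 ≠ 0 := by
    rw [hcast]
    exact_mod_cast h1r2.ne'
  have hn1r2 : ‖(1:ℂ) - (r:ℂ)^2‖ = 1 - r^2 := by
    rw [hcast, Complex.norm_real, Real.norm_eq_abs, abs_of_pos h1r2]
  obtain ⟨b, hb⟩ : ∃ b : ℂ, b = (1 - ψ (r:ℂ)^2)/(1 - (r:ℂ)^2) - 1 := ⟨_, rfl⟩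
  have hbeq : b = -((ψ (r:ℂ) - r) * (ψ (r:ℂ) + r)) / (1 - (r:ℂ)^2) := by
    rw [hb]
    field_simp
    ring
  have hnb : ‖b‖ ≤ 3*C₁*(1-r)^2 := by
    rw [hbeq, norm_div, norm_neg, norm_mul, hn1r2]
    have hsum : ‖ψ (r:ℂ) + r‖ ≤ 3 := by
      have h1 : ‖ψ (r:ℂ) + r‖ ≤ ‖ψ (r:ℂ) - r‖ + ‖(2*r : ℂ)‖ := by
        have he : ψ (r:ℂ) + r = (ψ (r:ℂ) - r) + 2*(r:ℂ) := by ring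
        rw [he]
        exact norm_add_le _ _
      have h2 : ‖(2*r : ℂ)‖ = 2*r := by
        rw [show (2*(r:ℂ)) = ((2*r : ℝ) : ℂ) by push_cast; ring, Complex.norm_real]
        rw [Real.norm_eq_abs, abs_of_pos (by linarith)]
      rw [h2] at h1; linarith
    rw [div_le_iff₀ h1r2]
    have key : ‖ψ (r:ℂ) - (r:ℂ)‖ * ‖ψ (r:ℂ) + (r:ℂ)‖ ≤ C₁ * (1-r)^3 * 3 :=
      mul_le_mul hδ hsum (norm_nonneg _) (by positivity)
    calc ‖ψ (r:ℂ) - (r:ℂ)‖ * ‖ψ (r:ℂ) + (r:ℂ)‖ ≤ C₁ * (1-r)^3 * 3 := key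
      _ ≤ 3*C₁*(1-r)^2*(1-r^2) := aux_denom C₁ r hC₁.le (by linarith) hr1.le
  have hnbhalf : ‖b‖ ≤ 1/2 := by
    have hsq : (1-r)^2 ≤ (1-r) := aux_pow2_le (1-r) h1r.le (by linarith)
    have h3 : 3*C₁*(1-r)^2 ≤ 3*C₁*(1-r) :=
      mul_le_mul_of_nonneg_left hsq (by positivity)
    have h4 : 3*C₁*(1-r) ≤ 1/2 := aux_3ct_le_half C₁ (1-r) hC₁ h1r.le hrB
    linarith
  have h1b : (1:ℝ)/2 ≤ ‖1 + b‖ := by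
    have h5 := norm_sub_le (1 + b) b
    rw [add_sub_cancel_right, norm_one] at h5
    linarith
  have h1bne : (1:ℂ) + b ≠ 0 := by
    intro h; rw [h, norm_zero] at h1b; linarith
  have h1bq : (1:ℂ) + b = (1 - ψ (r:ℂ)^2)/(1 - (r:ℂ)^2) := by
    rw [hb]; ring
  have hfact : 1 - ψ (r:ℂ)^2 = (1 + b) * (1 - (r:ℂ)^2) := by
    rw [h1bq, div_mul_cancel₀ _ h1r2c]
  refine ⟨(a - b)/(1 + b), ?_, ?_⟩
  · rw [hfact, hax]
    have hE : (1:ℂ) + (a - b)/(1 + b) = (1 + a)/(1 + b) := by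
      rw [add_div' (a - b) 1 (1 + b) h1bne]
      congr 1
      ring
    rw [hE, div_mul_div_comm, one_mul, mul_comm]
  · rw [norm_div]
    have hnum : ‖a - b‖ ≤ 10*C₁*(1-r)^2 := by
      have := norm_sub_le a b; linarith
    calc ‖a - b‖ / ‖1 + b‖ ≤ (10*C₁*(1-r)^2) / (1/2) :=
          div_le_div₀ (by positivity) hnum (by norm_num) h1b
      _ = 20*C₁*(1-r)^2 := by ring
      _ ≤ (20*C₁+1)*(1-r)^2 := by linarith [sq_nonneg (1-r)]
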